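/- Let m ≥ 2, 0 ≤ β < 1, let k(z) = z + ∑_{n≥2} k_n z^n be bi-univalent with k₂ ≠ 0, k₃ ≠ 0 and 3k₃ − 2k₂² ≠ 0, and let f(z) = z + ∑_{n≥2} a_n z^n belong to the class C_m^k(β), i.e., BV^k(m; 1, β). Then |a₂| ≤ min{ √( m(1−β)/|6k₃ − 4k₂²| ) , m(1−β)/(2|k₂|) }. -/

import Mathlib

open MeasureTheory Set Metric Complex

noncomputable section

/-- The `n`-th MacLaurin coefficient of `f`, i.e. `f⁽ⁿ⁾(0)/n!`. -/
def mc (f : ℂ → ℂ) (n : ℕ) : ℂ := iteratedDeriv n f 0 / (n.factorial : ℂ)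

/-- The open unit disk in `ℂ`. -/
def unitDisk : Set ℂ := Metric.ball (0 : ℂ) 1

/-- The kernel `(1 - z e^{it})/(1 + z e^{it})`. -/
def pmKernel (z : ℂ) (t : ℝ) : ℂ :=
  (1 - z * Complex.exp (t * Complex.I)) / (1 + z * Complex.exp (t * Complex.I))

/-- The class `P_m` of functions with bounded boundary rotation: `p` is analytic on the unit
disk, `p 0 = 1`, and `p` is represented against a finite signed Borel measure
`μ = μp - μn` on `[0, 2π]` with `μ([0,2π]) = 1` and total variation `‖μ‖ ≤ m/2`. -/
def MemPm (m : ℝ) (p : ℂ → ℂ) : Prop :=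
  AnalyticOnNhd ℂ p unitDisk ∧ p 0 = 1 ∧
  ∃ μp μn : Measure ℝ, IsFiniteMeasure μp ∧ IsFiniteMeasure μn ∧
    (μp (Set.Icc 0 (2 * Real.pi))).toReal - (μn (Set.Icc 0 (2 * Real.pi))).toReal = 1 ∧
    (μp (Set.Icc 0 (2 * Real.pi))).toReal + (μn (Set.Icc 0 (2 * Real.pi))).toReal ≤ m / 2 ∧
    ∀ z ∈ unitDisk, p z =
      (∫ t in Set.Icc 0 (2 * Real.pi), pmKernel z t ∂μp) -
      (∫ t in Set.Icc 0 (2 * Real.pi), pmKernel z t ∂μn)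

/-- `p ∈ P_m(β)` iff `p = β + (1 - β) q` on the unit disk for some `q ∈ P_m`. -/
def MemPmBeta (m β : ℝ) (p : ℂ → ℂ) : Prop :=
  ∃ q : ℂ → ℂ, MemPm m q ∧ ∀ z ∈ unitDisk, p z = (β : ℂ) + (1 - (β : ℂ)) * q z

/-- `f` and `g` form a bi-univalent pair: `f` is analytic and injective on the unit disk with
`f 0 = 0`, `f' 0 = 1`, and `g` is the univalent analytic continuation of `f⁻¹` to the unit
disk: `g` is analytic and injective on the unit disk, `g 0 = 0`, and `f (g w) = w` for
`|w| < 1/4`. -/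
def BiUnivalentPair (f g : ℂ → ℂ) : Prop :=
  AnalyticOnNhd ℂ f unitDisk ∧ f 0 = 0 ∧ deriv f 0 = 1 ∧ Set.InjOn f unitDisk ∧
  AnalyticOnNhd ℂ g unitDisk ∧ Set.InjOn g unitDisk ∧ g 0 = 0 ∧
  ∀ w : ℂ, ‖w‖ < 1 / 4 → f (g w) = w

/-- MacLaurin coefficients of the Hadamard convolution `f ∗ k`. -/
def hadCoeff (f k : ℂ → ℂ) (n : ℕ) : ℂ :=
  if n = 0 then 0 else if n = 1 then 1 else mc f n * mc k n

/-- The Hadamard convolution `F(z) = (f ∗ k)(z) = z + ∑_{n≥2} a_n k_n z^n`. -/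
def hadFun (f k : ℂ → ℂ) (z : ℂ) : ℂ := ∑' n : ℕ, hadCoeff f k n * z ^ n

/-- The expression `1 + z F''(z)/F'(z)`. -/
def convexOp (F : ℂ → ℂ) (z : ℂ) : ℂ := 1 + z * deriv (deriv F) z / deriv F z

/-- `f ∈ C_m^k(β) = BV^k(m; 1, β)`: `f` is bi-univalent with inverse `g`, the convolutions
`F = f ∗ k` and `G = g ∗ k` converge on the unit disk, have non-vanishing derivative on the
disk, and both `1 + z F''/F'` and `1 + w G''/G'` belong to `P_m(β)`. -/
def MemC (m β : ℝ) (k f g : ℂ → ℂ) : Prop :=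
  BiUnivalentPair f g ∧
  (∀ z ∈ unitDisk, Summable fun n : ℕ => hadCoeff f k n * z ^ n) ∧
  (∀ w ∈ unitDisk, Summable fun n : ℕ => hadCoeff g k n * w ^ n) ∧
  (∀ z ∈ unitDisk, deriv (hadFun f k) z ≠ 0) ∧
  (∀ w ∈ unitDisk, deriv (hadFun g k) w ≠ 0) ∧
  MemPmBeta m β (convexOp (hadFun f k)) ∧ MemPmBeta m β (convexOp (hadFun g k))


open scoped NNReal ENNReal Topology

/-! ### Auxiliary lemmas -/

lemma hadFun_hasFPS (c : ℕ → ℂ)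
    (hs : ∀ z ∈ unitDisk, Summable fun n : ℕ => c n * z ^ n) :
    HasFPowerSeriesOnBall (fun z => ∑' n : ℕ, c n * z ^ n)
      (FormalMultilinearSeries.ofScalars ℂ c) 0 1 := by
  set p := FormalMultilinearSeries.ofScalars ℂ c with hp
  have hrad : 1 ≤ p.radius := by
    apply ENNReal.le_of_forall_nnreal_lt
    intro r hr
    have hz : ((r : ℝ) : ℂ) ∈ unitDisk := by
      simp only [unitDisk, Metric.mem_ball, dist_zero_right]
      simpa using (ENNReal.coe_lt_one_iff.mp hr)
    have hsum := hs _ hz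
    apply p.le_radius_of_tendsto (l := 0)
    have h0 := hsum.tendsto_atTop_zero
    have h1 : Filter.Tendsto (fun n : ℕ => ‖c n * ((r : ℝ) : ℂ) ^ n‖) Filter.atTop (nhds 0) := by
      simpa using h0.norm
    convert h1 using 2 with n
    rw [hp, FormalMultilinearSeries.ofScalars_norm, norm_mul, norm_pow]
    norm_num
  have hps := p.hasFPowerSeriesOnBall (lt_of_lt_of_le one_pos hrad)
  have h1 : p.sum = fun z => ∑' n : ℕ, c n * z ^ n := by
    funext x
    rw [show p.sum = FormalMultilinearSeries.ofScalarsSum c from rfl,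
      FormalMultilinearSeries.ofScalars_sum_eq]
    simp [smul_eq_mul]
  rw [h1] at hps
  exact hps.mono one_pos hrad

lemma iteratedDeriv_of_hasFPS {F : ℂ → ℂ} {c : ℕ → ℂ}
    (h : HasFPowerSeriesOnBall F (FormalMultilinearSeries.ofScalars ℂ c) 0 1) (n : ℕ) :
    iteratedDeriv n F 0 = (n.factorial : ℂ) * c n := by
  have h2 := h.factorial_smul (1 : ℂ) n
  rw [FormalMultilinearSeries.ofScalars_apply_eq] at h2
  rw [iteratedDeriv_eq_iteratedFDeriv, ← h2]
  simp [nsmul_eq_mul]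

lemma analyticOnNhd_of_hasFPS {F : ℂ → ℂ} {c : ℕ → ℂ}
    (h : HasFPowerSeriesOnBall F (FormalMultilinearSeries.ofScalars ℂ c) 0 1) :
    AnalyticOnNhd ℂ F unitDisk := by
  intro z hz
  apply h.analyticAt_of_mem
  simp only [EMetric.mem_ball, edist_zero_right]
  have : dist z 0 < 1 := Metric.mem_ball.mp hz
  rw [dist_zero_right] at this
  calc (‖z‖₊ : ℝ≥0∞) < ENNReal.ofReal 1 := by
        rw [← ENNReal.ofReal_coe_nnreal]
        exact (ENNReal.ofReal_lt_ofReal_iff one_pos).mpr (by simpa using this)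
    _ = 1 := by simp

lemma derivs_of_hasFPS {F : ℂ → ℂ} {c : ℕ → ℂ}
    (h : HasFPowerSeriesOnBall F (FormalMultilinearSeries.ofScalars ℂ c) 0 1) :
    deriv F 0 = c 1 ∧ deriv (deriv F) 0 = 2 * c 2 ∧
      deriv (deriv (deriv F)) 0 = 6 * c 3 := by
  have h1 := iteratedDeriv_of_hasFPS h 1
  have h2 := iteratedDeriv_of_hasFPS h 2
  have h3 := iteratedDeriv_of_hasFPS h 3
  rw [show iteratedDeriv 1 F = deriv F by
    simp [iteratedDeriv_succ, iteratedDeriv_zero]] at h1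
  rw [show iteratedDeriv 2 F = deriv (deriv F) by
    simp [iteratedDeriv_succ, iteratedDeriv_zero]] at h2
  rw [show iteratedDeriv 3 F = deriv (deriv (deriv F)) by
    simp [iteratedDeriv_succ, iteratedDeriv_zero]] at h3
  refine ⟨by simpa using h1, by simpa using h2, by rw [h3]; norm_num [Nat.factorial]⟩

lemma convexOp_derivs (F : ℂ → ℂ) (hF : AnalyticOnNhd ℂ F unitDisk)
    (hne : ∀ z ∈ unitDisk, deriv F z ≠ 0) (h1 : deriv F 0 = 1) :
    deriv (convexOp F) 0 = deriv (deriv F) 0 ∧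
    deriv (deriv (convexOp F)) 0 =
      2 * (deriv (deriv (deriv F)) 0 - deriv (deriv F) 0 ^ 2) := by
  have hop : IsOpen unitDisk := Metric.isOpen_ball
  have h0 : (0 : ℂ) ∈ unitDisk := by simp [unitDisk]
  have hF' : AnalyticOnNhd ℂ (deriv F) unitDisk := hF.deriv
  have hF'' : AnalyticOnNhd ℂ (deriv (deriv F)) unitDisk := hF'.deriv
  set h : ℂ → ℂ := fun z => deriv (deriv F) z / deriv F z with hhdef
  have hh : AnalyticOnNhd ℂ h unitDisk := hF''.div hF' hne
  have hfun : convexOp F = fun z => 1 + z * h z := by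
    funext z; simp [convexOp, hhdef, mul_div_assoc]
  have hd : ∀ z ∈ unitDisk, deriv (convexOp F) z = h z + z * deriv h z := by
    intro z hz
    rw [hfun]
    have hda0 := ((hasDerivAt_id z).mul
      ((hh z hz).differentiableAt.hasDerivAt)).const_add 1
    have hda1 : HasDerivAt (fun z => 1 + z * h z) (h z + z * deriv h z) z := by
      have : (1 : ℂ) * h z + id z * deriv h z = h z + z * deriv h z := by simp
      exact this ▸ (by simpa using hda0)
    exact hda1.deriv
  have hderiv1 : deriv (convexOp F) 0 = deriv (deriv F) 0 := by
    rw [hd 0 h0]; simp [hhdef, h1]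
  refine ⟨hderiv1, ?_⟩
  have hev : deriv (convexOp F) =ᶠ[𝓝 0] fun z => h z + z * deriv h z :=
    Filter.eventuallyEq_of_mem (hop.mem_nhds h0) hd
  rw [hev.deriv_eq]
  have hh' : AnalyticOnNhd ℂ (deriv h) unitDisk := hh.deriv
  have hda := ((hh 0 h0).differentiableAt.hasDerivAt).add
    ((hasDerivAt_id 0).mul ((hh' 0 h0).differentiableAt.hasDerivAt))
  have hda2 : HasDerivAt (fun z => h z + z * deriv h z)
      (deriv h 0 + (1 * deriv h 0 + 0 * deriv (deriv h) 0)) 0 := by exact hda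
  rw [hda2.deriv]
  have hdh : deriv h 0 = (deriv (deriv (deriv F)) 0 * deriv F 0 -
      deriv (deriv F) 0 * deriv (deriv F) 0) / deriv F 0 ^ 2 :=
    deriv_div (hF'' 0 h0).differentiableAt (hF' 0 h0).differentiableAt (hne 0 h0)
  rw [hdh, h1]
  ring

def K1 (z : ℂ) (t : ℝ) : ℂ :=
  (-2 * Complex.exp (t * Complex.I)) / (1 + z * Complex.exp (t * Complex.I)) ^ 2
def K2 (z : ℂ) (t : ℝ) : ℂ :=
  (4 * Complex.exp (t * Complex.I) ^ 2) / (1 + z * Complex.exp (t * Complex.I)) ^ 3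

lemma exp_norm_one (t : ℝ) : ‖Complex.exp (t * Complex.I)‖ = 1 := by
  rw [Complex.norm_exp]
  simp

lemma den_lb {z : ℂ} (t : ℝ) : 1 - ‖z‖ ≤ ‖1 + z * Complex.exp (t * Complex.I)‖ := by
  have h := norm_sub_norm_le (1 : ℂ) (-(z * Complex.exp (t * Complex.I)))
  rw [sub_neg_eq_add, norm_neg, norm_one, norm_mul, exp_norm_one, mul_one] at h
  exact h

lemma den_lb' {z : ℂ} (hz : ‖z‖ < 3/4) (t : ℝ) :
    (1/4 : ℝ) ≤ ‖1 + z * Complex.exp (t * Complex.I)‖ := by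
  have := den_lb (z := z) t; linarith

lemma den_ne {z : ℂ} (hz : ‖z‖ < 3/4) (t : ℝ) :
    1 + z * Complex.exp (t * Complex.I) ≠ 0 := by
  intro h
  have := den_lb' hz t
  rw [h] at this; simp at this; linarith

lemma pmKernel_hasDerivAt {z : ℂ} (hz : ‖z‖ < 3/4) (t : ℝ) :
    HasDerivAt (fun w => pmKernel w t) (K1 z t) z := by
  set e := Complex.exp (t * Complex.I)
  have hne : 1 + z * e ≠ 0 := den_ne hz t
  have hnum : HasDerivAt (fun w : ℂ => 1 - w * e) (-e) z := by
    simpa using ((hasDerivAt_id z).mul_const e).const_sub 1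
  have hden : HasDerivAt (fun w : ℂ => 1 + w * e) e z := by
    simpa using ((hasDerivAt_id z).mul_const e).const_add 1
  have h := hnum.div hden hne
  have heq : (-e * (1 + z * e) - (1 - z * e) * e) / (1 + z * e) ^ 2 = K1 z t := by
    unfold K1
    rw [show -e * (1 + z * e) - (1 - z * e) * e = -2 * e by ring]
  rw [← heq]
  exact h

lemma K1_hasDerivAt {z : ℂ} (hz : ‖z‖ < 3/4) (t : ℝ) :
    HasDerivAt (fun w => K1 w t) (K2 z t) z := by
  set e := Complex.exp (t * Complex.I)
  have hne : 1 + z * e ≠ 0 := den_ne hz t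
  have hden : HasDerivAt (fun w : ℂ => (1 + w * e) ^ 2) (2 * (1 + z * e) * e) z := by
    have h1 : HasDerivAt (fun w : ℂ => 1 + w * e) e z := by
      simpa using ((hasDerivAt_id z).mul_const e).const_add 1
    have := h1.fun_pow 2
    simpa [mul_comm, mul_assoc, mul_left_comm] using this
  have h := (hasDerivAt_const z (-2 * e)).div hden (pow_ne_zero 2 hne)
  have heq : (0 * (1 + z * e) ^ 2 - -2 * e * (2 * (1 + z * e) * e)) / ((1 + z * e) ^ 2) ^ 2
      = K2 z t := by
    unfold K2
    rw [div_eq_div_iff (pow_ne_zero 2 (pow_ne_zero 2 hne)) (pow_ne_zero 3 hne)]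
    ring
  rw [← heq]
  exact h

lemma pmKernel_bound {z : ℂ} (hz : ‖z‖ < 3/4) (t : ℝ) : ‖pmKernel z t‖ ≤ 256 := by
  unfold pmKernel
  rw [norm_div]
  have h1 : ‖1 - z * Complex.exp (t * Complex.I)‖ ≤ 2 := by
    calc ‖1 - z * Complex.exp (t * Complex.I)‖ ≤ ‖(1:ℂ)‖ + ‖z * Complex.exp (t * Complex.I)‖ :=
          norm_sub_le _ _
      _ ≤ 2 := by rw [norm_mul, exp_norm_one, mul_one, norm_one]; linarith
  have h2 := den_lb' hz t
  calc ‖1 - z * Complex.exp (t * Complex.I)‖ / ‖1 + z * Complex.exp (t * Complex.I)‖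
      ≤ 2 / (1/4) := div_le_div₀ (by norm_num) h1 (by norm_num) h2
    _ ≤ 256 := by norm_num

lemma K1_bound {z : ℂ} (hz : ‖z‖ < 3/4) (t : ℝ) : ‖K1 z t‖ ≤ 256 := by
  unfold K1
  rw [norm_div, norm_mul, exp_norm_one, mul_one, norm_pow]
  have h2 := den_lb' hz t
  have : ‖(-2 : ℂ)‖ = 2 := by norm_num
  rw [this]
  calc (2:ℝ) / ‖1 + z * Complex.exp (t * Complex.I)‖ ^ 2 ≤ 2 / (1/4)^2 :=
        div_le_div₀ (by norm_num) le_rfl (by norm_num)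
          (pow_le_pow_left₀ (by norm_num) h2 2)
    _ ≤ 256 := by norm_num

lemma K2_bound {z : ℂ} (hz : ‖z‖ < 3/4) (t : ℝ) : ‖K2 z t‖ ≤ 256 := by
  unfold K2
  rw [norm_div, norm_mul, norm_pow, exp_norm_one, one_pow, mul_one, norm_pow]
  have h2 := den_lb' hz t
  have : ‖(4 : ℂ)‖ = 4 := by norm_num
  rw [this]
  calc (4:ℝ) / ‖1 + z * Complex.exp (t * Complex.I)‖ ^ 3 ≤ 4 / (1/4)^3 :=
        div_le_div₀ (by norm_num) le_rfl (by norm_num)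
          (pow_le_pow_left₀ (by norm_num) h2 3)
    _ ≤ 256 := by norm_num

lemma pmKernel_cont {z : ℂ} (hz : ‖z‖ < 3/4) : Continuous (pmKernel z) := by
  apply Continuous.div
  · fun_prop
  · fun_prop
  · exact fun t => den_ne hz t

lemma K1_cont {z : ℂ} (hz : ‖z‖ < 3/4) : Continuous (K1 z) := by
  apply Continuous.div
  · fun_prop
  · fun_prop
  · exact fun t => pow_ne_zero 2 (den_ne hz t)

lemma K2_cont {z : ℂ} (hz : ‖z‖ < 3/4) : Continuous (K2 z) := by
  apply Continuous.div
  · fun_prop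
  · fun_prop
  · exact fun t => pow_ne_zero 3 (den_ne hz t)

lemma int_hasDerivAt (ν : Measure ℝ) [IsFiniteMeasure ν] (k k' : ℂ → ℝ → ℂ) (C : ℝ)
    (hmeas : ∀ z : ℂ, ‖z‖ < 3/4 → Continuous (k z))
    (hmeas' : ∀ z : ℂ, ‖z‖ < 3/4 → Continuous (k' z))
    (hbk : ∀ z : ℂ, ‖z‖ < 3/4 → ∀ t, ‖k z t‖ ≤ C)
    (hbk' : ∀ z : ℂ, ‖z‖ < 3/4 → ∀ t, ‖k' z t‖ ≤ C)
    (hd : ∀ t : ℝ, ∀ z : ℂ, ‖z‖ < 3/4 → HasDerivAt (fun w => k w t) (k' z t) z)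
    (z₀ : ℂ) (hz₀ : ‖z₀‖ < 3/4) :
    HasDerivAt (fun z => ∫ t, k z t ∂ν) (∫ t, k' z₀ t ∂ν) z₀ := by
  set ε := 3/4 - ‖z₀‖ with hε
  have hεpos : 0 < ε := by rw [hε]; linarith
  have hball : ∀ x ∈ Metric.ball z₀ ε, ‖x‖ < 3/4 := by
    intro x hx
    rw [Metric.mem_ball, dist_eq_norm] at hx
    have := norm_sub_norm_le x z₀
    rw [hε] at hx
    linarith
  refine (hasDerivAt_integral_of_dominated_loc_of_deriv_le (𝕜 := ℂ) (bound := fun _ => C)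
    (Metric.ball_mem_nhds z₀ hεpos) ?_ ?_ ?_ ?_ ?_ ?_).2
  · filter_upwards [Metric.ball_mem_nhds z₀ hεpos] with x hx
    exact (hmeas x (hball x hx)).aestronglyMeasurable
  · exact (integrable_const C).mono' ((hmeas z₀ hz₀).aestronglyMeasurable)
      (Filter.Eventually.of_forall (hbk z₀ hz₀))
  · exact (hmeas' z₀ hz₀).aestronglyMeasurable
  · exact Filter.Eventually.of_forall fun t x hx => hbk' x (hball x hx) t
  · exact integrable_const C
  · exact Filter.Eventually.of_forall fun t x hx => hd t x (hball x hx)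

lemma K1_zero_norm (t : ℝ) : ‖K1 0 t‖ = 2 := by
  simp [K1, norm_mul, exp_norm_one]

lemma K2_zero_norm (t : ℝ) : ‖K2 0 t‖ = 4 := by
  simp [K2, norm_mul, norm_pow, exp_norm_one]

lemma MemPm_bounds {m : ℝ} {q : ℂ → ℂ} (hq : MemPm m q) :
    ‖deriv q 0‖ ≤ m ∧ ‖deriv (deriv q) 0‖ ≤ 2 * m := by
  obtain ⟨hqa, hq0, μp, μn, hfp, hfn, hmass, hbound, hrep⟩ := hq
  haveI := hfp; haveI := hfn
  set s : Set ℝ := Set.Icc 0 (2 * Real.pi) with hs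
  set νp := μp.restrict s with hνp
  set νn := μn.restrict s with hνn
  set Q : ℂ → ℂ := fun z => (∫ t, pmKernel z t ∂νp) - ∫ t, pmKernel z t ∂νn with hQ
  set Q1 : ℂ → ℂ := fun z => (∫ t, K1 z t ∂νp) - ∫ t, K1 z t ∂νn with hQ1
  set Q2 : ℂ → ℂ := fun z => (∫ t, K2 z t ∂νp) - ∫ t, K2 z t ∂νn with hQ2
  have hQd : ∀ z : ℂ, ‖z‖ < 3/4 → HasDerivAt Q (Q1 z) z := fun z hz =>
    (int_hasDerivAt νp pmKernel K1 256 (fun _ h => pmKernel_cont h) (fun _ h => K1_cont h)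
      (fun _ h => pmKernel_bound h) (fun _ h => K1_bound h)
      (fun t z hz => pmKernel_hasDerivAt hz t) z hz).sub
    (int_hasDerivAt νn pmKernel K1 256 (fun _ h => pmKernel_cont h) (fun _ h => K1_cont h)
      (fun _ h => pmKernel_bound h) (fun _ h => K1_bound h)
      (fun t z hz => pmKernel_hasDerivAt hz t) z hz)
  have hQ1d : ∀ z : ℂ, ‖z‖ < 3/4 → HasDerivAt Q1 (Q2 z) z := fun z hz =>
    (int_hasDerivAt νp K1 K2 256 (fun _ h => K1_cont h) (fun _ h => K2_cont h)
      (fun _ h => K1_bound h) (fun _ h => K2_bound h)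
      (fun t z hz => K1_hasDerivAt hz t) z hz).sub
    (int_hasDerivAt νn K1 K2 256 (fun _ h => K1_cont h) (fun _ h => K2_cont h)
      (fun _ h => K1_bound h) (fun _ h => K2_bound h)
      (fun t z hz => K1_hasDerivAt hz t) z hz)
  have hqev : q =ᶠ[𝓝 0] Q := by
    have hmem : unitDisk ∈ 𝓝 (0:ℂ) :=
      Metric.isOpen_ball.mem_nhds (by simp [unitDisk])
    filter_upwards [hmem] with z hz
    exact hrep z hz
  have hd1 : deriv q 0 = Q1 0 := by
    rw [hqev.deriv_eq]
    exact (hQd 0 (by simp)).deriv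
  have hset : ∀ᶠ z in 𝓝 (0:ℂ), ‖z‖ < 3/4 := by
    filter_upwards [Metric.ball_mem_nhds (0:ℂ) (by norm_num : (0:ℝ) < 3/4)] with z hz
    simpa [dist_zero_right] using hz
  have hd2 : deriv (deriv q) 0 = Q2 0 := by
    have h1 : deriv q =ᶠ[𝓝 0] Q1 :=
      (hqev.deriv).trans (hset.mono fun z hz => (hQd z hz).deriv)
    rw [h1.deriv_eq]
    exact (hQ1d 0 (by simp)).deriv
  have key : ∀ (k : ℝ → ℂ) (c : ℝ), 0 ≤ c → (∀ t, ‖k t‖ = c) →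
      ‖(∫ t, k t ∂νp) - ∫ t, k t ∂νn‖ ≤ c * ((μp s).toReal + (μn s).toReal) := by
    intro k c hc hk
    have h1 : ‖∫ t, k t ∂νp‖ ≤ c * (μp s).toReal := by
      have := norm_integral_le_of_norm_le_const (μ := νp) (f := k) (C := c)
        (Filter.Eventually.of_forall fun t => (hk t).le)
      simpa [hνp, Measure.restrict_apply_univ, measureReal_def] using this
    have h2 : ‖∫ t, k t ∂νn‖ ≤ c * (μn s).toReal := by
      have := norm_integral_le_of_norm_le_const (μ := νn) (f := k) (C := c)
        (Filter.Eventually.of_forall fun t => (hk t).le)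
      simpa [hνn, Measure.restrict_apply_univ, measureReal_def] using this
    calc ‖(∫ t, k t ∂νp) - ∫ t, k t ∂νn‖ ≤ ‖∫ t, k t ∂νp‖ + ‖∫ t, k t ∂νn‖ := norm_sub_le _ _
      _ ≤ c * (μp s).toReal + c * (μn s).toReal := add_le_add h1 h2
      _ = c * ((μp s).toReal + (μn s).toReal) := by ring
  constructor
  · rw [hd1]
    have := key (K1 0) 2 (by norm_num) K1_zero_norm
    have h2 : (2:ℝ) * ((μp s).toReal + (μn s).toReal) ≤ 2 * (m / 2) := by
      have := hbound; nlinarith [hbound]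
    calc ‖Q1 0‖ ≤ 2 * ((μp s).toReal + (μn s).toReal) := this
      _ ≤ m := by linarith
  · rw [hd2]
    have := key (K2 0) 4 (by norm_num) K2_zero_norm
    calc ‖Q2 0‖ ≤ 4 * ((μp s).toReal + (μn s).toReal) := this
      _ ≤ 2 * m := by nlinarith [hbound]
lemma inverse_coeffs {f g : ℂ → ℂ} (h : BiUnivalentPair f g) :
    deriv g 0 = 1 ∧
    deriv (deriv g) 0 = - deriv (deriv f) 0 ∧
    deriv (deriv (deriv g)) 0 =
      3 * deriv (deriv f) 0 ^ 2 - deriv (deriv (deriv f)) 0 := by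
  obtain ⟨hfa, hf0, hf1, hfin, hga, hgin, hg0, hfg⟩ := h
  have h0 : (0:ℂ) ∈ unitDisk := by simp [unitDisk]
  have hV : ∀ᶠ z in 𝓝 (0:ℂ), z ∈ unitDisk :=
    Metric.isOpen_ball.mem_nhds h0
  have hU : ∀ᶠ z in 𝓝 (0:ℂ), g z ∈ unitDisk := by
    have hc : ContinuousAt g 0 := (hga 0 h0).continuousAt
    have : unitDisk ∈ 𝓝 (g 0) := by rw [hg0]; exact Metric.isOpen_ball.mem_nhds h0
    exact hc.eventually_mem this
  -- f ∘ g = id near 0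
  have hid : (f ∘ g) =ᶠ[𝓝 0] fun w => w := by
    filter_upwards [Metric.ball_mem_nhds (0:ℂ) (by norm_num : (0:ℝ) < 1/4)] with w hw
    exact hfg w (by simpa [Metric.mem_ball, dist_zero_right] using hw)
  have hid1 : deriv (f ∘ g) =ᶠ[𝓝 0] fun _ => (1:ℂ) := by
    have := hid.deriv
    rwa [deriv_id''] at this
  have h1 : deriv (f ∘ g) 0 = 1 := hid1.self_of_nhds
  have hid2 : deriv (deriv (f ∘ g)) =ᶠ[𝓝 0] fun _ => (0:ℂ) := by
    have := hid1.deriv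
    rwa [deriv_const'] at this
  have h2 : deriv (deriv (f ∘ g)) 0 = 0 := hid2.self_of_nhds
  have h3 : deriv (deriv (deriv (f ∘ g))) 0 = 0 := by
    have := hid2.deriv
    rw [deriv_const'] at this
    exact this.self_of_nhds
  -- chain rule
  set ψ : ℂ → ℂ := fun z => deriv f (g z) * deriv g z with hψdef
  have hφd : deriv (f ∘ g) =ᶠ[𝓝 0] ψ := by
    filter_upwards [hU, hV] with z hz1 hz2
    exact deriv_comp (x := z) (hfa (g z) hz1).differentiableAt (hga z hz2).differentiableAt
  set χ : ℂ → ℂ := fun z => deriv (deriv f) (g z) * deriv g z * deriv g z +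
    deriv f (g z) * deriv (deriv g) z with hχdef
  have hψd : ∀ z, g z ∈ unitDisk → z ∈ unitDisk → HasDerivAt ψ (χ z) z := by
    intro z hz1 hz2
    have hc1 : HasDerivAt (fun z => deriv f (g z)) (deriv (deriv f) (g z) * deriv g z) z :=
      HasDerivAt.comp z (hfa.deriv (g z) hz1).differentiableAt.hasDerivAt
        (hga z hz2).differentiableAt.hasDerivAt
    have hc2 : HasDerivAt (deriv g) (deriv (deriv g) z) z :=
      (hga.deriv z hz2).differentiableAt.hasDerivAt
    have := hc1.mul hc2
    exact this
  have hψev : deriv ψ =ᶠ[𝓝 0] χ := by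
    filter_upwards [hU, hV] with z hz1 hz2
    exact (hψd z hz1 hz2).deriv
  -- first equation
  have e1 : deriv f 0 * deriv g 0 = 1 := by
    have := hφd.self_of_nhds
    rw [h1] at this
    rw [hψdef] at this
    simpa [hg0] using this.symm
  -- second equation
  have e2 : deriv (deriv f) 0 * deriv g 0 * deriv g 0 + deriv f 0 * deriv (deriv g) 0 = 0 := by
    have := hφd.deriv_eq (x := 0)
    rw [h2] at this
    have h := (hψd 0 (by rwa [hg0]) h0).deriv
    rw [h] at this
    rw [hχdef] at this
    simpa [hg0] using this.symm
  -- third equation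
  have hχ0 : HasDerivAt χ
      ((deriv (deriv (deriv f)) 0 * deriv g 0 * deriv g 0 +
        deriv (deriv f) 0 * deriv (deriv g) 0) * deriv g 0 +
        (deriv (deriv f) 0 * deriv g 0) * deriv (deriv g) 0 +
        ((deriv (deriv f) 0 * deriv g 0) * deriv (deriv g) 0 +
          deriv f 0 * deriv (deriv (deriv g)) 0)) 0 := by
    have hc1 : HasDerivAt (fun z => deriv (deriv f) (g z))
        (deriv (deriv (deriv f)) (g 0) * deriv g 0) 0 :=
      HasDerivAt.comp 0 ((hfa.deriv.deriv) (g 0) (by rwa [hg0])).differentiableAt.hasDerivAt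
        (hga 0 h0).differentiableAt.hasDerivAt
    have hc2 : HasDerivAt (deriv g) (deriv (deriv g) 0) 0 :=
      (hga.deriv 0 h0).differentiableAt.hasDerivAt
    have hc3 : HasDerivAt (fun z => deriv f (g z)) (deriv (deriv f) (g 0) * deriv g 0) 0 :=
      HasDerivAt.comp 0 ((hfa.deriv) (g 0) (by rwa [hg0])).differentiableAt.hasDerivAt
        (hga 0 h0).differentiableAt.hasDerivAt
    have hc4 : HasDerivAt (deriv (deriv g)) (deriv (deriv (deriv g)) 0) 0 :=
      (hga.deriv.deriv 0 h0).differentiableAt.hasDerivAt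
    have := ((hc1.fun_mul hc2).fun_mul hc2).fun_add (hc3.fun_mul hc4)
    rw [hg0] at this
    convert this using 1
  have e3 : (deriv (deriv (deriv f)) 0 * deriv g 0 * deriv g 0 +
        deriv (deriv f) 0 * deriv (deriv g) 0) * deriv g 0 +
        (deriv (deriv f) 0 * deriv g 0) * deriv (deriv g) 0 +
        ((deriv (deriv f) 0 * deriv g 0) * deriv (deriv g) 0 +
          deriv f 0 * deriv (deriv (deriv g)) 0) = 0 := by
    have hev2 : deriv (deriv (f ∘ g)) =ᶠ[𝓝 0] χ := (hφd.deriv).trans hψev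
    have := hev2.deriv_eq (x := 0)
    rw [h3] at this
    rw [hχ0.deriv] at this
    exact this.symm
  rw [hf1] at e1 e2 e3
  have hb1 : deriv g 0 = 1 := by linear_combination e1
  rw [hb1] at e2 e3
  have hb2 : deriv (deriv g) 0 = - deriv (deriv f) 0 := by linear_combination e2
  refine ⟨hb1, hb2, ?_⟩
  rw [hb2] at e3
  linear_combination e3

lemma MemPmBeta_bounds {m β : ℝ} (hβ : β ≤ 1) {p : ℂ → ℂ} (h : MemPmBeta m β p) :
    ‖deriv p 0‖ ≤ (1 - β) * m ∧
    ‖deriv (deriv p) 0‖ ≤ (1 - β) * (2 * m) := by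
  obtain ⟨q, hq, hpq⟩ := h
  have hqa : AnalyticOnNhd ℂ q unitDisk := hq.1
  have h0 : (0:ℂ) ∈ unitDisk := by simp [unitDisk]
  have hop : IsOpen unitDisk := Metric.isOpen_ball
  have habs : ‖1 - (β:ℂ)‖ = 1 - β := by
    rw [show (1 - (β:ℂ)) = ((1-β : ℝ) : ℂ) by push_cast; ring, Complex.norm_real, Real.norm_eq_abs,
      _root_.abs_of_nonneg (by linarith)]
  have hd : ∀ z ∈ unitDisk, deriv p z = (1 - (β:ℂ)) * deriv q z := by
    intro z hz
    have hev : p =ᶠ[𝓝 z] fun w => (β:ℂ) + (1 - (β:ℂ)) * q w :=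
      Filter.eventuallyEq_of_mem (hop.mem_nhds hz) hpq
    rw [hev.deriv_eq]
    exact ((((hqa z hz).differentiableAt.hasDerivAt).const_mul
      (1 - (β:ℂ))).const_add (β:ℂ)).deriv
  have hb := MemPm_bounds hq
  constructor
  · rw [hd 0 h0, norm_mul, habs]
    exact mul_le_mul_of_nonneg_left hb.1 (by linarith)
  · have hev2 : deriv p =ᶠ[𝓝 0] fun z => (1 - (β:ℂ)) * deriv q z :=
      Filter.eventuallyEq_of_mem (hop.mem_nhds h0) hd
    rw [hev2.deriv_eq,
      (((hqa.deriv 0 h0).differentiableAt.hasDerivAt).const_mul (1 - (β:ℂ))).deriv,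
      norm_mul, habs]
    exact mul_le_mul_of_nonneg_left hb.2 (by linarith)

lemma mc_two (f : ℂ → ℂ) : mc f 2 = deriv (deriv f) 0 / 2 := by
  rw [mc, show iteratedDeriv 2 f = deriv (deriv f) by
    simp [iteratedDeriv_succ, iteratedDeriv_zero]]
  norm_num [Nat.factorial]

lemma mc_three (f : ℂ → ℂ) : mc f 3 = deriv (deriv (deriv f)) 0 / 6 := by
  rw [mc, show iteratedDeriv 3 f = deriv (deriv (deriv f)) by
    simp [iteratedDeriv_succ, iteratedDeriv_zero]]
  norm_num [Nat.factorial]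

/-- Corollary 2.4, bound for `|a₂|` in the class `C_m^k(β) = BV^k(m; 1, β)`. -/
theorem C_a2_bound (m β : ℝ) (hm : 2 ≤ m) (hβ0 : 0 ≤ β) (hβ1 : β < 1)
    (k kinv f g : ℂ → ℂ) (hk : BiUnivalentPair k kinv)
    (hk2 : mc k 2 ≠ 0) (hk3 : mc k 3 ≠ 0)
    (hD : 3 * mc k 3 - 2 * mc k 2 ^ 2 ≠ 0)
    (hf : MemC m β k f g) :
    ‖mc f 2‖ ≤
      min (Real.sqrt (m * (1 - β) / ‖6 * mc k 3 - 4 * mc k 2 ^ 2‖))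
        (m * (1 - β) / (2 * ‖mc k 2‖)) := by
  obtain ⟨hbi, hsf, hsg, hneF, hneG, hPF, hPG⟩ := hf
  have hFps : HasFPowerSeriesOnBall (hadFun f k)
      (FormalMultilinearSeries.ofScalars ℂ (hadCoeff f k)) 0 1 := hadFun_hasFPS _ hsf
  have hGps : HasFPowerSeriesOnBall (hadFun g k)
      (FormalMultilinearSeries.ofScalars ℂ (hadCoeff g k)) 0 1 := hadFun_hasFPS _ hsg
  have hFd := derivs_of_hasFPS hFps
  have hGd := derivs_of_hasFPS hGps
  have hFa := analyticOnNhd_of_hasFPS hFps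
  have hGa := analyticOnNhd_of_hasFPS hGps
  have hF1 : deriv (hadFun f k) 0 = 1 := by rw [hFd.1]; simp [hadCoeff]
  have hG1 : deriv (hadFun g k) 0 = 1 := by rw [hGd.1]; simp [hadCoeff]
  have hCF := convexOp_derivs _ hFa hneF hF1
  have hCG := convexOp_derivs _ hGa hneG hG1
  have hBF := MemPmBeta_bounds (le_of_lt hβ1) hPF
  have hBG := MemPmBeta_bounds (le_of_lt hβ1) hPG
  set a2 := mc f 2 with ha2
  set a3 := mc f 3 with ha3
  set k2 := mc k 2 with hk2d
  set k3 := mc k 3 with hk3d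
  have hc2 : hadCoeff f k 2 = a2 * k2 := by simp [hadCoeff, ha2, hk2d]
  have hc3 : hadCoeff f k 3 = a3 * k3 := by simp [hadCoeff, ha3, hk3d]
  obtain ⟨hg1, hg2, hg3⟩ := inverse_coeffs hbi
  have hmcg2 : mc g 2 = - a2 := by
    rw [mc_two, hg2, ha2, mc_two]; ring
  have hmcg3 : mc g 3 = 2 * a2 ^ 2 - a3 := by
    rw [mc_three, hg3, ha2, ha3, mc_two, mc_three]; ring
  have hd2 : hadCoeff g k 2 = (-a2) * k2 := by simp [hadCoeff, hmcg2, ha2, hk2d]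
  have hd3 : hadCoeff g k 3 = (2 * a2 ^ 2 - a3) * k3 := by simp [hadCoeff, hmcg3, ha2, ha3, hk3d]
  -- coefficient inequalities
  have hb1 : ‖2 * (a2 * k2)‖ ≤ (1 - β) * m := by
    have h := hBF.1
    rw [hCF.1, hFd.2.1, hc2] at h
    exact h
  have hb2F : ‖2 * (6 * (a3 * k3) - (2 * (a2 * k2)) ^ 2)‖ ≤ (1 - β) * (2 * m) := by
    have h := hBF.2
    rw [hCF.2, hFd.2.2, hFd.2.1, hc3, hc2] at h
    exact h
  have hb2G : ‖2 * (6 * ((2 * a2 ^ 2 - a3) * k3) - (2 * ((-a2) * k2)) ^ 2)‖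
      ≤ (1 - β) * (2 * m) := by
    have h := hBG.2
    rw [hCG.2, hGd.2.2, hGd.2.1, hd3, hd2] at h
    exact h
  have hsum : ‖4 * a2 ^ 2 * (6 * k3 - 4 * k2 ^ 2)‖ ≤ 4 * (m * (1 - β)) := by
    have hXY : (4 : ℂ) * a2 ^ 2 * (6 * k3 - 4 * k2 ^ 2) =
        (2 * (6 * (a3 * k3) - (2 * (a2 * k2)) ^ 2)) +
        (2 * (6 * ((2 * a2 ^ 2 - a3) * k3) - (2 * ((-a2) * k2)) ^ 2)) := by ring
    rw [hXY]
    calc ‖_‖ ≤ _ := norm_add_le _ _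
      _ ≤ (1 - β) * (2 * m) + (1 - β) * (2 * m) := add_le_add hb2F hb2G
      _ = 4 * (m * (1 - β)) := by ring
  have hDpos : 0 < ‖6 * k3 - 4 * k2 ^ 2‖ := by
    apply norm_pos_iff.mpr
    intro h
    apply hD
    have : (6 : ℂ) * k3 - 4 * k2 ^ 2 = 2 * (3 * k3 - 2 * k2 ^ 2) := by ring
    rw [this] at h
    rcases mul_eq_zero.mp h with h' | h'
    · norm_num at h'
    · exact h'
  have hk2pos : 0 < ‖k2‖ := norm_pos_iff.mpr hk2
  have hMnn : 0 ≤ m * (1 - β) := by nlinarith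
  apply le_min
  · rw [Real.le_sqrt (norm_nonneg _)
      (div_nonneg hMnn hDpos.le)]
    rw [le_div_iff₀ hDpos]
    have heq : ‖4 * a2 ^ 2 * (6 * k3 - 4 * k2 ^ 2)‖ =
        4 * (‖a2‖ ^ 2 * ‖6 * k3 - 4 * k2 ^ 2‖) := by
      rw [norm_mul, norm_mul, norm_pow]
      norm_num
      ring
    rw [heq] at hsum
    linarith
  · rw [le_div_iff₀ (by positivity)]
    have heq : ‖2 * (a2 * k2)‖ = 2 * (‖a2‖ * ‖k2‖) := by
      rw [norm_mul, norm_mul]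
      norm_num
    rw [heq] at hb1
    nlinarith [norm_nonneg a2, norm_nonneg k2]
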